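/- For the van der Pol oscillator ẋ = y, ẏ = μ(1−x²)y − x with μ > 0, the set T_r = {(x,y) : x² + y² ≥ r²} is positively invariant for every 0 < r ≤ 1: any solution with x(t₀)² + y(t₀)² ≥ r² satisfies x(t)² + y(t)² ≥ r² for all t ≥ t₀. -/

import Mathlib

/-- for the van der Pol oscillator `ẋ = y`, `ẏ = μ(1−x²)y − x`
with `μ > 0`, the set `{(x,y) : x² + y² ≥ r²}` is positively invariant for
every `0 < r ≤ 1`. -/
theorem vdp_absorbing_domain_positively_invariant
    (μ r : ℝ) (hμ : 0 < μ) (hr : 0 < r) (hr1 : r ≤ 1)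
    (x y : ℝ → ℝ)
    (hx : ∀ t : ℝ, HasDerivAt x (y t) t)
    (hy : ∀ t : ℝ, HasDerivAt y (μ * (1 - (x t) ^ 2) * y t - x t) t)
    (t₀ : ℝ) (h0 : r ^ 2 ≤ (x t₀) ^ 2 + (y t₀) ^ 2) :
    ∀ t : ℝ, t₀ ≤ t → r ^ 2 ≤ (x t) ^ 2 + (y t) ^ 2 := by
  set E : ℝ → ℝ := fun t => (x t) ^ 2 + (y t) ^ 2 with hEdef
  have hE : ∀ t : ℝ, HasDerivAt E (2 * μ * (1 - (x t) ^ 2) * (y t) ^ 2) t := by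
    intro t
    have h1 := ((hx t).fun_pow 2).add ((hy t).fun_pow 2)
    refine h1.congr_deriv ?_
    ring
  have hEcont : Continuous E :=
    continuous_iff_continuousAt.mpr fun t => (hE t).continuousAt
  intro t₁ ht₁
  by_contra hcon
  push_neg at hcon
  have hcon' : E t₁ < r ^ 2 := hcon
  -- set of good times in [t₀, t₁]
  set S : Set ℝ := Set.Icc t₀ t₁ ∩ {t | r ^ 2 ≤ E t} with hSdef
  have hScl : IsClosed S := isClosed_Icc.inter (isClosed_le continuous_const hEcont)
  have hSne : S.Nonempty := ⟨t₀, ⟨le_refl _, ht₁⟩, h0⟩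
  have hSbdd : BddAbove S := ⟨t₁, fun a ha => ha.1.2⟩
  set s := sSup S with hs
  have hsS : s ∈ S := hScl.csSup_mem hSne hSbdd
  have hst₁ : s ≤ t₁ := hsS.1.2
  have hsE : r ^ 2 ≤ E s := hsS.2
  have hslt : s < t₁ := hst₁.lt_of_ne fun h => absurd hsE (by rw [h]; exact not_le.mpr hcon')
  -- On (s, t₁], E < r²
  have hlt : ∀ t, s < t → t ≤ t₁ → E t < r ^ 2 := by
    intro t hts htt₁
    by_contra h
    push_neg at h
    have : t ∈ S := ⟨⟨le_trans hsS.1.1 hts.le, htt₁⟩, h⟩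
    exact absurd (le_csSup hSbdd this) (not_le.mpr hts)
  -- E is monotone on [s, t₁]
  have hmono : MonotoneOn E (Set.Icc s t₁) := by
    apply monotoneOn_of_deriv_nonneg (convex_Icc s t₁)
      (hEcont.continuousOn)
      (fun t ht => ((hE t).differentiableAt).differentiableWithinAt)
    intro t ht
    rw [interior_Icc] at ht
    have hEt : E t < r ^ 2 := hlt t ht.1 ht.2.le
    have hx2 : (x t) ^ 2 ≤ 1 := by
      have h1 : (x t) ^ 2 ≤ E t := le_add_of_nonneg_right (sq_nonneg _)
      have h2 : r ^ 2 ≤ 1 := by nlinarith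
      linarith
    rw [(hE t).deriv]
    have : 0 ≤ 1 - (x t) ^ 2 := by linarith
    positivity
  have := hmono ⟨le_refl _, hst₁⟩ ⟨hslt.le, le_refl _⟩ hslt.le
  linarith [hsE, hcon', this]
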